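/- Let $G$ be a discrete group acting on the $\sigma$-finite measure space $(\Omega,\mu)$ by measure-class-preserving measurable bijections $\alpha_g$, and define $(T_gf)(x)=f(\alpha_g^{-1}(x))$ on $D=L^\infty_\mu(\Omega,E)$. Let $V_g$ be the shifts of $H=\ell^\infty(G,D)$ and $\bar a$ the twisted multiplications $(\bar a\xi)(g)=\hat T_g(a)\xi(g)$. If the action is metrically free, then for every finite $F\subset G$ and $a_g\in L^\infty_\mu(\Omega,L(E))$: $\big\|\sum_{g\in F}a_gT_g\big\|_{L(D)} = \big\|\sum_{g\in F}\bar a_gV_g\big\|_{L(H)}$, without any amenability assumption on $G$. -/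

import Mathlib

open MeasureTheory
open scoped ENNReal

/-- Metrically free action (see the paper, §2). -/
def MetricallyFree {Ω : Type*} [MeasurableSpace Ω] (μ : Measure Ω)
    {G : Type*} (α : G → Ω → Ω) : Prop :=
  ∀ (S : Finset G) (Δ : Set Ω), MeasurableSet Δ → 0 < μ Δ →
    ∃ Δ' : Set Ω, MeasurableSet Δ' ∧ Δ' ⊆ Δ ∧ 0 < μ Δ' ∧
      ∀ g ∈ S, ∀ h ∈ S, g ≠ h → μ (α g '' Δ' ∩ α h '' Δ') = 0

namespace Stmt17Aux

variable {Ω : Type*} [MeasurableSpace Ω] {μ : Measure Ω}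

/-- Pulling back a null set along a measurable equiv whose pushforward is
absolutely continuous w.r.t. `μ`. -/
theorem null_preimage (e : Ω ≃ᵐ Ω) (h1 : μ.map e ≪ μ) {s : Set Ω} (hs : μ s = 0) :
    μ (e ⁻¹' s) = 0 := by
  set t := toMeasurable μ s with ht
  have hts : s ⊆ t := subset_toMeasurable μ s
  have htm : MeasurableSet t := measurableSet_toMeasurable μ s
  have ht0 : μ t = 0 := by rw [ht, measure_toMeasurable]; exact hs
  have : μ.map e t = 0 := h1 ht0
  rw [Measure.map_apply e.measurable htm] at this
  exact measure_mono_null (Set.preimage_mono hts) this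

theorem null_preimage_symm (e : Ω ≃ᵐ Ω) (h2 : μ ≪ μ.map e) {s : Set Ω} (hs : μ s = 0) :
    μ (e.symm ⁻¹' s) = 0 := by
  set t := toMeasurable μ s with ht
  have hts : s ⊆ t := subset_toMeasurable μ s
  have htm : MeasurableSet t := measurableSet_toMeasurable μ s
  have ht0 : μ t = 0 := by rw [ht, measure_toMeasurable]; exact hs
  have hpre : e ⁻¹' (e.symm ⁻¹' t) = t := by
    ext x; simp
  have hmap : μ.map e (e.symm ⁻¹' t) = 0 := by
    rw [Measure.map_apply e.measurable (e.symm.measurable htm), hpre]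
    exact ht0
  have : μ (e.symm ⁻¹' t) = 0 := h2 hmap
  exact measure_mono_null (Set.preimage_mono hts) this

/-- Composing an a.e. equality with a measure-class preserving equiv. -/
theorem comp_ae (e : Ω ≃ᵐ Ω) (h1 : μ.map e ≪ μ) {E : Type*} {f₁ f₂ : Ω → E}
    (h : f₁ =ᵐ[μ] f₂) : (fun y => f₁ (e y)) =ᵐ[μ] fun y => f₂ (e y) := by
  have hnull : μ {x | f₁ x ≠ f₂ x} = 0 := h
  have : μ (e ⁻¹' {x | f₁ x ≠ f₂ x}) = 0 := null_preimage e h1 hnull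
  exact this

theorem comp_ae_symm (e : Ω ≃ᵐ Ω) (h2 : μ ≪ μ.map e) {E : Type*} {f₁ f₂ : Ω → E}
    (h : f₁ =ᵐ[μ] f₂) : (fun y => f₁ (e.symm y)) =ᵐ[μ] fun y => f₂ (e.symm y) := by
  have hnull : μ {x | f₁ x ≠ f₂ x} = 0 := h
  have : μ (e.symm ⁻¹' {x | f₁ x ≠ f₂ x}) = 0 := null_preimage_symm e h2 hnull
  exact this

variable {E : Type*} [NormedAddCommGroup E]

/-- For `p = ∞`, an a.e. bound gives a norm bound (no finiteness of `μ` needed). -/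
theorem Lp_top_norm_le {f : Lp E ⊤ μ} {C : ℝ} (hC : 0 ≤ C)
    (h : ∀ᵐ x ∂μ, ‖f x‖ ≤ C) : ‖f‖ ≤ C := by
  rw [Lp.norm_def, eLpNorm_exponent_top]
  exact ENNReal.toReal_le_of_le_ofReal hC (eLpNormEssSup_le_of_ae_bound h)

theorem Lp_top_ae_norm_le (f : Lp E ⊤ μ) : ∀ᵐ x ∂μ, ‖f x‖ ≤ ‖f‖ := by
  have h := enorm_ae_le_eLpNormEssSup (⇑f) μ
  have hne : eLpNormEssSup (⇑f) μ ≠ ⊤ := by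
    rw [← eLpNorm_exponent_top]
    exact Lp.eLpNorm_ne_top f
  filter_upwards [h] with x hx
  have := ENNReal.toReal_mono hne hx
  simpa [Lp.norm_def, eLpNorm_exponent_top, toReal_enorm] using this

theorem coeFn_finset_sum {ι : Type*} (s : Finset ι) (f : ι → Lp E ⊤ μ) :
    ⇑(∑ i ∈ s, f i) =ᵐ[μ] fun x => ∑ i ∈ s, f i x := by
  classical
  induction s using Finset.induction_on with
  | empty => simp only [Finset.sum_empty]; exact Lp.coeFn_zero (E := E) (p := ⊤) (μ := μ)
  | insert i s' hni ih =>
    rw [Finset.sum_insert hni]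
    filter_upwards [Lp.coeFn_add (f i) (∑ j ∈ s', f j), ih] with x hx1 hx2
    simp only [hx1, Pi.add_apply, hx2, Finset.sum_insert hni]

end Stmt17Aux

open Stmt17Aux

/-- `G` a discrete group acting on the σ-finite space `(Ω, μ)` by
measure-class-preserving measurable bijections `α g`, `(T_g f)(x) = f(α_g⁻¹ x)` on
`D = L^∞_μ(Ω, E)`, and `b̄ = ∑_{g∈F} ā_g V_g` the corresponding regular representation
operator on `H = ℓ^∞(G, D)`, acting by
`(b̄ ξ)(g)(x) = ∑_{g₀∈F} a_{g₀}(α_g⁻¹ x)(ξ(g g₀)(x))` a.e.  If the action is metrically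
free then `‖∑_{g∈F} a_g T_g‖_{L(D)} = ‖b̄‖_{L(H)}`, without any amenability assumption. -/
theorem stmt17 {Ω : Type*} [MeasurableSpace Ω] (μ : Measure Ω) [SigmaFinite μ]
    {E : Type*} [NormedAddCommGroup E] [NormedSpace ℝ E] [CompleteSpace E]
    {G : Type*} [Group G]
    (α : G → Ω ≃ᵐ Ω)
    (hgrp : ∀ g h x, α (g * h) x = α g (α h x))
    (hclass : ∀ g : G, μ.map (α g) ≪ μ ∧ μ ≪ μ.map (α g))
    (hfree : MetricallyFree μ fun g => (α g : Ω → Ω))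
    (T : G → (Lp E ⊤ μ ≃ₗᵢ[ℝ] Lp E ⊤ μ))
    (hT : ∀ (g : G) (f : Lp E ⊤ μ),
      (T g f : Ω → E) =ᵐ[μ] fun x => f ((α g).symm x))
    (F : Finset G) (a : G → Ω → (E →L[ℝ] E))
    (ha : ∀ g, ∃ C : ℝ, ∀ᵐ x ∂μ, ‖a g x‖ ≤ C)
    (Mop : G → (Lp E ⊤ μ →L[ℝ] Lp E ⊤ μ))
    (hMop : ∀ (g : G) (f : Lp E ⊤ μ),
      (Mop g f : Ω → E) =ᵐ[μ] fun x => a g x (f x))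
    (bbar : lp (fun _ : G => Lp E ⊤ μ) ⊤ →L[ℝ] lp (fun _ : G => Lp E ⊤ μ) ⊤)
    (hbbar : ∀ (ξ : lp (fun _ : G => Lp E ⊤ μ) ⊤) (g : G),
      ((bbar ξ) g : Ω → E) =ᵐ[μ]
        fun x => ∑ g₀ ∈ F, a g₀ ((α g).symm x) ((ξ (g * g₀) : Ω → E) x)) :
    ‖∑ g ∈ F, (Mop g).comp
        ((T g).toContinuousLinearEquiv : Lp E ⊤ μ →L[ℝ] Lp E ⊤ μ)‖ = ‖bbar‖ := by
  classical
  have hGne : Nonempty G := ⟨1⟩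
  set b : Lp E ⊤ μ →L[ℝ] Lp E ⊤ μ :=
    ∑ g ∈ F, (Mop g).comp
      ((T g).toContinuousLinearEquiv : Lp E ⊤ μ →L[ℝ] Lp E ⊤ μ) with hb
  -- basic facts about the action
  have halpha1 : ∀ x, α 1 x = x := by
    intro x
    have := hgrp 1 1 x
    rw [mul_one] at this
    exact ((α 1).injective this).symm
  have halpha1symm : ∀ x, (α 1).symm x = x := by
    intro x
    have h1 := halpha1 ((α 1).symm x)
    rw [(α 1).apply_symm_apply] at h1
    exact h1.symm
  have halphainv : ∀ (k : G) (x : Ω), α k⁻¹ x = (α k).symm x := by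
    intro k x
    apply (α k).injective
    rw [(α k).apply_symm_apply, ← hgrp, mul_inv_cancel, halpha1]
  -- the operator `b` applied to `f`, as a function
  have hbapp : ∀ f : Lp E ⊤ μ,
      ⇑(b f) =ᵐ[μ] fun x => ∑ g₀ ∈ F, a g₀ x ((T g₀ f : Ω → E) x) := by
    intro f
    have h1 : b f = ∑ g₀ ∈ F, Mop g₀ (T g₀ f) := by
      rw [hb, ContinuousLinearMap.sum_apply]
      refine Finset.sum_congr rfl fun g₀ _ => ?_
      rfl
    rw [h1]
    have h2 := coeFn_finset_sum F (fun g₀ => Mop g₀ (T g₀ f))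
    have h3 : ∀ᵐ x ∂μ, ∀ g₀ ∈ F, (Mop g₀ (T g₀ f) : Ω → E) x = a g₀ x ((T g₀ f : Ω → E) x) :=
      (ae_ball_iff F.countable_toSet).2 fun g₀ _ => hMop g₀ (T g₀ f)
    filter_upwards [h2, h3] with x hx1 hx2
    rw [hx1]
    exact Finset.sum_congr rfl fun g₀ hg₀ => hx2 g₀ hg₀
  refine le_antisymm ?_ ?_
  · -- `‖b‖ ≤ ‖bbar‖` via the isometric embedding `f ↦ (g ↦ T g f)`
    refine ContinuousLinearMap.opNorm_le_bound _ (norm_nonneg bbar) fun f => ?_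
    have hmem : Memℓp (fun g : G => T g f) ⊤ := by
      apply memℓp_infty
      refine ⟨‖f‖, ?_⟩
      rintro - ⟨g, rfl⟩
      simp [LinearIsometryEquiv.norm_map]
    set ξf : lp (fun _ : G => Lp E ⊤ μ) ⊤ := ⟨fun g => T g f, hmem⟩ with hξf
    have hξfapp : ∀ g, ξf g = T g f := fun g => rfl
    have hξfnorm : ‖ξf‖ ≤ ‖f‖ := by
      rw [lp.norm_eq_ciSup]
      exact ciSup_le fun g => by
        rw [hξfapp, LinearIsometryEquiv.norm_map]
    have hkey : b f = (bbar ξf) 1 := by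
      apply Lp.ext
      have h1 := hbapp f
      have h2 := hbbar ξf 1
      have h3 : ∀ᵐ x ∂μ, ∀ g₀ ∈ F,
          ((ξf (1 * g₀) : Lp E ⊤ μ) : Ω → E) x = ((T g₀ f : Lp E ⊤ μ) : Ω → E) x := by
        refine Filter.Eventually.of_forall fun x => fun g₀ _ => ?_
        rw [hξfapp, one_mul]
      refine h1.trans (Filter.EventuallyEq.trans ?_ h2.symm)
      filter_upwards [h3] with x hx
      refine Finset.sum_congr rfl fun g₀ hg₀ => ?_
      rw [halpha1symm, hx g₀ hg₀]
    calc ‖b f‖ = ‖(bbar ξf) 1‖ := by rw [hkey]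
      _ ≤ ‖bbar ξf‖ := lp.norm_apply_le_norm (by simp) (bbar ξf) 1
      _ ≤ ‖bbar‖ * ‖ξf‖ := bbar.le_opNorm ξf
      _ ≤ ‖bbar‖ * ‖f‖ := mul_le_mul_of_nonneg_left hξfnorm (norm_nonneg bbar)
  · -- `‖bbar‖ ≤ ‖b‖` using metric freeness
    refine ContinuousLinearMap.opNorm_le_bound _ (norm_nonneg b) fun ξ => ?_
    rw [lp.norm_eq_ciSup]
    refine ciSup_le fun g => ?_
    set c := ‖ξ‖ with hc
    have hc0 : 0 ≤ c := norm_nonneg ξ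
    set u : Lp E ⊤ μ := (bbar ξ) g with hu
    by_contra hcon
    push_neg at hcon
    set K := ‖b‖ with hK
    have hKc0 : 0 ≤ K * c := mul_nonneg (norm_nonneg b) hc0
    set r : ℝ := (K * c + ‖u‖) / 2 with hr
    have hr1 : K * c < r := by rw [hr]; linarith
    have hr2 : r < ‖u‖ := by rw [hr]; linarith
    have hr0 : 0 < r := lt_of_le_of_lt hKc0 hr1
    -- the set where `‖u (α g y)‖` exceeds `r`
    set M : Set Ω := {x | r < ‖(u : Ω → E) x‖} with hM
    have hMmeas : MeasurableSet M :=
      measurableSet_lt measurable_const (Lp.stronglyMeasurable u).norm.measurable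
    set Δ : Set Ω := (α g) ⁻¹' M with hΔ
    have hΔmeas : MeasurableSet Δ := (α g).measurable hMmeas
    have hΔpos : 0 < μ Δ := by
      rcases eq_zero_or_pos (μ Δ) with h0 | h0
      · exfalso
        have hmap : μ.map (α g) M = 0 := by
          rw [Measure.map_apply (α g).measurable hMmeas]; exact h0
        have hMnull : μ M = 0 := (hclass g).2 hmap
        have hae : ∀ᵐ x ∂μ, ‖(u : Ω → E) x‖ ≤ r := by
          rw [ae_iff]
          convert hMnull using 2
          ext x; simp [hM, not_le]
        have := Lp_top_norm_le hr0.le hae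
        linarith
      · exact h0
    obtain ⟨Δ', hΔ'meas, hΔ'sub, hΔ'pos, hdisj⟩ :=
      hfree (F.image (·⁻¹)) Δ hΔmeas hΔpos
    -- pairwise a.e. disjointness of the preimages `(α g₀) ⁻¹' Δ'`
    have hpre : ∀ g₀ g₁, g₀ ∈ F → g₁ ∈ F → g₀ ≠ g₁ →
        μ ((α g₀) ⁻¹' Δ' ∩ (α g₁) ⁻¹' Δ') = 0 := by
      intro g₀ g₁ h₀ h₁ hne
      have himg : ∀ k : G, (fun x => (α k⁻¹ : Ω → Ω) x) '' Δ' = (α k) ⁻¹' Δ' := by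
        intro k
        have : (fun x => (α k⁻¹ : Ω → Ω) x) = ⇑(α k).symm := funext (halphainv k)
        rw [this]
        exact congrFun (Set.image_eq_preimage_of_inverse (α k).apply_symm_apply
          (α k).symm_apply_apply) Δ'
      have h := hdisj g₀⁻¹ (Finset.mem_image_of_mem _ h₀) g₁⁻¹ (Finset.mem_image_of_mem _ h₁)
        (fun h => hne (inv_injective h))
      rw [himg g₀, himg g₁] at h
      exact h
    -- the exceptional null set
    set N : Set Ω := ⋃ g₀ ∈ (F : Set G), ⋃ g₁ ∈ (F : Set G),
      (if g₀ = g₁ then (∅ : Set Ω) else ((α g₀) ⁻¹' Δ' ∩ (α g₁) ⁻¹' Δ')) with hN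
    have hNnull : μ N = 0 := by
      rw [hN, measure_biUnion_null_iff F.countable_toSet]
      intro g₀ h₀
      rw [measure_biUnion_null_iff F.countable_toSet]
      intro g₁ h₁
      split_ifs with h
      · simp
      · exact hpre g₀ g₁ h₀ h₁ h
    have hNmeas : MeasurableSet N := by
      refine MeasurableSet.biUnion F.countable_toSet fun g₀ _ => ?_
      refine MeasurableSet.biUnion F.countable_toSet fun g₁ _ => ?_
      split_ifs
      · exact MeasurableSet.empty
      · exact ((α g₀).measurable hΔ'meas).inter ((α g₁).measurable hΔ'meas)
    set S : G → Set Ω := fun g₀ => (α g₀) ⁻¹' Δ' \ N with hS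
    have hSmeas : ∀ g₀, MeasurableSet (S g₀) :=
      fun g₀ => ((α g₀).measurable hΔ'meas).diff hNmeas
    have hSdisj : ∀ g₀ ∈ F, ∀ g₁ ∈ F, g₀ ≠ g₁ → ∀ z, z ∈ S g₀ → z ∉ S g₁ := by
      intro g₀ h₀ g₁ h₁ hne z hz0 hz1
      apply hz0.2
      rw [hN]
      refine Set.mem_biUnion h₀ (Set.mem_biUnion h₁ ?_)
      rw [if_neg hne]
      exact ⟨hz0.1, hz1.1⟩
    -- truncated representatives
    set v' : G → Ω → E := fun g₀ =>
      Set.indicator {x | ‖((ξ (g * g₀) : Lp E ⊤ μ) : Ω → E) x‖ ≤ c}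
        ⇑(ξ (g * g₀) : Lp E ⊤ μ) with hv'
    have hv'bound : ∀ g₀ x, ‖v' g₀ x‖ ≤ c := by
      intro g₀ x
      simp only [hv']
      by_cases hx : x ∈ {x | ‖((ξ (g * g₀) : Lp E ⊤ μ) : Ω → E) x‖ ≤ c}
      · rw [Set.indicator_of_mem hx]; exact hx
      · rw [Set.indicator_of_notMem hx]; simpa using hc0
    have hv'ae : ∀ g₀, v' g₀ =ᵐ[μ] ⇑(ξ (g * g₀) : Lp E ⊤ μ) := by
      intro g₀
      have h1 := Lp_top_ae_norm_le (ξ (g * g₀) : Lp E ⊤ μ)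
      have h2 : ‖(ξ (g * g₀) : Lp E ⊤ μ)‖ ≤ c :=
        lp.norm_apply_le_norm (by simp) ξ (g * g₀)
      filter_upwards [h1] with x hx
      simp only [hv']
      rw [Set.indicator_of_mem]
      exact Set.mem_setOf.2 (hx.trans h2)
    have hv'sm : ∀ g₀, StronglyMeasurable (v' g₀) := by
      intro g₀
      refine (Lp.stronglyMeasurable _).indicator ?_
      exact measurableSet_le (Lp.stronglyMeasurable _).norm.measurable measurable_const
    set w : G → Ω → E := fun g₀ z => v' g₀ (α (g * g₀) z) with hw
    have hwsm : ∀ g₀, StronglyMeasurable (w g₀) :=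
      fun g₀ => (hv'sm g₀).comp_measurable (α (g * g₀)).measurable
    set f : Ω → E := fun z => ∑ g₀ ∈ F, (S g₀).indicator (w g₀) z with hf
    have hfsm : StronglyMeasurable f :=
      Finset.stronglyMeasurable_fun_sum F fun g₀ _ => (hwsm g₀).indicator (hSmeas g₀)
    have hfbound : ∀ z, ‖f z‖ ≤ c := by
      intro z
      simp only [hf]
      by_cases hz : ∃ g₀ ∈ F, z ∈ S g₀
      · obtain ⟨g₀, hg₀F, hzS⟩ := hz
        have heq : ∑ g₁ ∈ F, (S g₁).indicator (w g₁) z = (S g₀).indicator (w g₀) z := by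
          refine Finset.sum_eq_single_of_mem g₀ hg₀F fun g₁ h₁ hne => ?_
          exact Set.indicator_of_notMem (hSdisj g₀ hg₀F g₁ h₁ (Ne.symm hne) z hzS) _
        rw [heq, Set.indicator_of_mem hzS]
        exact hv'bound g₀ _
      · push_neg at hz
        have heq : ∑ g₁ ∈ F, (S g₁).indicator (w g₁) z = 0 :=
          Finset.sum_eq_zero fun g₁ h₁ => Set.indicator_of_notMem (hz g₁ h₁) _
        rw [heq]; simpa using hc0
    have hfmem : MemLp f ⊤ μ :=
      memLp_top_of_bound hfsm.aestronglyMeasurable c (Filter.Eventually.of_forall hfbound)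
    set fL : Lp E ⊤ μ := hfmem.toLp f with hfL
    have hfLnorm : ‖fL‖ ≤ c := by
      refine Lp_top_norm_le hc0 ?_
      filter_upwards [MemLp.coeFn_toLp hfmem] with z hz
      rw [hz]; exact hfbound z
    -- the main a.e. identities
    have hA : ⇑(b fL) =ᵐ[μ] fun y => ∑ g₀ ∈ F, a g₀ y (f ((α g₀).symm y)) := by
      have h1 := hbapp fL
      have h2 : ∀ᵐ y ∂μ, ∀ g₀ ∈ F,
          ((T g₀ fL : Lp E ⊤ μ) : Ω → E) y = f ((α g₀).symm y) := by
        refine (ae_ball_iff F.countable_toSet).2 fun g₀ _ => ?_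
        have ha1 := hT g₀ fL
        have ha2 : (fun y => (fL : Ω → E) ((α g₀).symm y)) =ᵐ[μ]
            fun y => f ((α g₀).symm y) :=
          comp_ae_symm (α g₀) (hclass g₀).2 (MemLp.coeFn_toLp hfmem)
        filter_upwards [ha1, ha2] with y hy1 hy2
        rw [hy1, hy2]
      filter_upwards [h1, h2] with y hy1 hy2
      rw [hy1]
      exact Finset.sum_congr rfl fun g₀ hg₀ => by rw [hy2 g₀ hg₀]
    have hB : ∀ᵐ y ∂μ, (u : Ω → E) (α g y) =
        ∑ g₀ ∈ F, a g₀ y (((ξ (g * g₀) : Lp E ⊤ μ) : Ω → E) (α g y)) := by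
      have h1 := comp_ae (α g) (hclass g).1 (hbbar ξ g)
      filter_upwards [h1] with y hy
      rw [hu]
      rw [hy]
      exact Finset.sum_congr rfl fun g₀ hg₀ => by rw [(α g).symm_apply_apply]
    have hC : ∀ᵐ y ∂μ, ∀ g₀ ∈ F, (α g₀).symm y ∉ N := by
      refine (ae_ball_iff F.countable_toSet).2 fun g₀ _ => ?_
      have h1 : μ ((α g₀).symm ⁻¹' N) = 0 := null_preimage_symm (α g₀) (hclass g₀).2 hNnull
      rw [ae_iff]
      convert h1 using 2
      ext y; simp
    have hD : ∀ᵐ y ∂μ, ∀ g₀ ∈ F,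
        v' g₀ (α g y) = ((ξ (g * g₀) : Lp E ⊤ μ) : Ω → E) (α g y) := by
      refine (ae_ball_iff F.countable_toSet).2 fun g₀ _ => ?_
      exact comp_ae (α g) (hclass g).1 (hv'ae g₀)
    -- on `Δ'`, `b fL` is a.e. large
    have hclaim : ∀ᵐ y ∂μ, y ∈ Δ' → r < ‖(b fL : Ω → E) y‖ := by
      filter_upwards [hA, hB, hC, hD] with y hy1 hy2 hy3 hy4 hyΔ'
      have hstep : ∀ g₀ ∈ F, f ((α g₀).symm y) =
          ((ξ (g * g₀) : Lp E ⊤ μ) : Ω → E) (α g y) := by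
        intro g₀ hg₀
        set z := (α g₀).symm y with hz
        have hzmem : z ∈ S g₀ := by
          constructor
          · show α g₀ z ∈ Δ'
            rw [hz, (α g₀).apply_symm_apply]
            exact hyΔ'
          · exact hy3 g₀ hg₀
        have hfz : f z = w g₀ z := by
          simp only [hf]
          have heq : ∑ g₁ ∈ F, (S g₁).indicator (w g₁) z = (S g₀).indicator (w g₀) z := by
            refine Finset.sum_eq_single_of_mem g₀ hg₀ fun g₁ h₁ hne => ?_
            exact Set.indicator_of_notMem (hSdisj g₀ hg₀ g₁ h₁ (Ne.symm hne) z hzmem) _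
          rw [heq, Set.indicator_of_mem hzmem]
        have hαz : α (g * g₀) z = α g y := by
          rw [hgrp g g₀ z, hz, (α g₀).apply_symm_apply]
        rw [hfz]
        simp only [hw]
        rw [hαz]
        exact hy4 g₀ hg₀
      have hbfLy : (b fL : Ω → E) y = (u : Ω → E) (α g y) := by
        rw [hy1, hy2]
        exact Finset.sum_congr rfl fun g₀ hg₀ => by rw [hstep g₀ hg₀]
      rw [hbfLy]
      exact hΔ'sub hyΔ'
    -- conclude
    have hge : r ≤ ‖b fL‖ := by
      by_contra h'
      push_neg at h'
      have h1 : ∀ᵐ y ∂μ, y ∉ Δ' := by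
        filter_upwards [hclaim, Lp_top_ae_norm_le (b fL)] with y hy1 hy2 hyΔ'
        exact absurd (hy1 hyΔ') (not_lt.2 (hy2.trans h'.le))
      exact absurd (measure_eq_zero_iff_ae_notMem.2 h1) hΔ'pos.ne'
    have : ‖b fL‖ ≤ K * c :=
      (b.le_opNorm fL).trans (mul_le_mul_of_nonneg_left hfLnorm (norm_nonneg b))
    linarith
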